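/- Let Φ : ℝ≥0 → ℝ≥0 be an increasing convex differentiable function with Φ(0)=0 such that √Φ is concave. Then for every x ≥ 0, Φ'(x/2) ≥ Φ'(x)/2. -/
import Mathlib


open Set

/-- Lemma 13 (iii): if `Φ : [0,∞) → [0,∞)` is increasing, convex, differentiable,
`Φ 0 = 0` and `√Φ` is concave, then for every `x ≥ 0`, `Φ'(x/2) ≥ Φ'(x)/2`. -/
theorem stmt_2 (Φ Φ' : ℝ → ℝ)
    (hmono : StrictMonoOn Φ (Ici 0))
    (hconv : ConvexOn ℝ (Ici 0) Φ)
    (hnonneg : ∀ x ∈ Ici (0:ℝ), 0 ≤ Φ x)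
    (h0 : Φ 0 = 0)
    (hderiv : ∀ x ∈ Ici (0:ℝ), HasDerivWithinAt Φ (Φ' x) (Ici 0) x)
    (hconc : ConcaveOn ℝ (Ici 0) (fun x => Real.sqrt (Φ x))) :
    ∀ x ∈ Ici (0:ℝ), Φ' (x / 2) ≥ Φ' x / 2 := by
  intro x hx
  rcases eq_or_lt_of_le (show (0:ℝ) ≤ x from hx) with rfl | hxpos
  · -- x = 0 : suffices Φ' 0 ≥ 0
    have h : (0:ℝ) ≤ Φ' 0 := by
      have ht := hasDerivWithinAt_iff_tendsto_slope.mp (hderiv 0 self_mem_Ici)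
      rw [Set.Ici_sdiff_left] at ht
      refine ge_of_tendsto ht ?_
      filter_upwards [self_mem_nhdsWithin] with y hy
      have hy0 : (0:ℝ) < y := hy
      have hΦy : 0 ≤ Φ y := hnonneg y (le_of_lt hy0)
      rw [slope_def_field, h0]
      apply div_nonneg <;> linarith
    norm_num
    linarith
  · have hx2 : x / 2 ∈ Ici (0:ℝ) := by simp; linarith
    have hΦx : 0 < Φ x := by
      have := hmono (self_mem_Ici) hx hxpos
      rwa [h0] at this
    have hΦx2 : 0 < Φ (x / 2) := by
      have := hmono (self_mem_Ici) hx2 (by linarith)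
      rwa [h0] at this
    have hlt : x / 2 < x := by linarith
    have hgx : HasDerivWithinAt (fun y => Real.sqrt (Φ y))
        (Φ' x / (2 * Real.sqrt (Φ x))) (Ici 0) x := (hderiv x hx).sqrt hΦx.ne'
    have hgx2 : HasDerivWithinAt (fun y => Real.sqrt (Φ y))
        (Φ' (x / 2) / (2 * Real.sqrt (Φ (x / 2)))) (Ici 0) (x / 2) :=
      (hderiv _ hx2).sqrt hΦx2.ne'
    have h1 : Φ' x / (2 * Real.sqrt (Φ x)) ≤ slope (fun y => Real.sqrt (Φ y)) (x / 2) x :=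
      hconc.le_slope_of_hasDerivWithinAt hx2 hx hlt hgx
    have h2 : slope (fun y => Real.sqrt (Φ y)) (x / 2) x
        ≤ Φ' (x / 2) / (2 * Real.sqrt (Φ (x / 2))) :=
      hconc.slope_le_of_hasDerivWithinAt hx2 hx hlt hgx2
    have key : Φ' x / (2 * Real.sqrt (Φ x)) ≤ Φ' (x / 2) / (2 * Real.sqrt (Φ (x / 2))) :=
      h1.trans h2
    -- midpoint concavity: √Φ(x/2) ≥ √Φ(x)/2
    have hmid : Real.sqrt (Φ x) / 2 ≤ Real.sqrt (Φ (x / 2)) := by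
      have h' := hconc.2 (self_mem_Ici) hx (by norm_num : (0:ℝ) ≤ 1/2)
        (by norm_num : (0:ℝ) ≤ 1/2) (by norm_num)
      simp only [smul_eq_mul] at h'
      rw [show (1:ℝ)/2 * 0 + 1/2 * x = x/2 by ring, h0, Real.sqrt_zero, mul_zero,
        zero_add] at h'
      linarith
    -- Φ' x ≥ 0 from convexity and monotonicity
    have hΦ'x : 0 ≤ Φ' x := by
      have hs := hconv.slope_le_of_hasDerivWithinAt self_mem_Ici hx hxpos (hderiv x hx)
      have : 0 ≤ slope Φ 0 x := by
        rw [slope_def_field, h0]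
        apply div_nonneg <;> [linarith [hnonneg x hx]; linarith]
      linarith
    have sx : 0 < Real.sqrt (Φ x) := Real.sqrt_pos.mpr hΦx
    have sx2 : 0 < Real.sqrt (Φ (x / 2)) := Real.sqrt_pos.mpr hΦx2
    rw [div_le_div_iff₀ (by positivity) (by positivity)] at key
    -- key : Φ' x * (2 * √Φ(x/2)) ≤ Φ' (x/2) * (2 * √Φ x)
    have step : Φ' x * Real.sqrt (Φ x) ≤ Φ' (x / 2) * (2 * Real.sqrt (Φ x)) := by
      nlinarith
    have : Φ' x ≤ 2 * Φ' (x / 2) := by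
      nlinarith
    linarith
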